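/- Let ε > 0 and let v, m : ℝ × [0,∞) → ℝ be 1-periodic in the space variable x, continuous on ℝ × [0,∞) and C² on ℝ × (0,∞), with m(x,t) > 0 for all (x,t). Suppose that on ℝ × (0,∞) they satisfy the parabolic system ∂_t v + ∂_x (v²/2 − m²/2) = ε ∂_{xx} v and ∂_t m − ∂_x (m v) = ε ∂_{xx} m, and that the initial data satisfy ∫₀¹ v(x,0) dx = 0 and ∫₀¹ m(x,0) dx = 1. Then the solution converges in L¹ to the constant stationary state (0,1): lim_{t→∞} ∫₀¹ |v(x,t)| dx = 0 and lim_{t→∞} ∫₀¹ |m(x,t) − 1| dx = 0. -/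

import Mathlib

open Filter intervalIntegral MeasureTheory Metric

section Aux

lemma cs01 {g : ℝ → ℝ} (hg : ContinuousOn g (Set.Icc 0 1)) :
    (∫ x in (0:ℝ)..1, |g x|) ^ 2 ≤ ∫ x in (0:ℝ)..1, (g x) ^ 2 := by
  have huIcc : Set.uIcc (0:ℝ) 1 = Set.Icc 0 1 := Set.uIcc_of_le zero_le_one
  have hgi : IntervalIntegrable g volume 0 1 := (huIcc ▸ hg).intervalIntegrable
  have habs : IntervalIntegrable (fun x => |g x|) volume 0 1 := hgi.abs
  have hsq : IntervalIntegrable (fun x => (g x) ^ 2) volume 0 1 :=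
    ((huIcc ▸ hg).pow 2).intervalIntegrable
  set I := ∫ x in (0:ℝ)..1, |g x| with hI
  have h0 : (0:ℝ) ≤ ∫ x in (0:ℝ)..1, (|g x| - I) ^ 2 :=
    intervalIntegral.integral_nonneg zero_le_one (fun x _ => sq_nonneg _)
  have hexp : ∀ x : ℝ, (|g x| - I) ^ 2 = (g x) ^ 2 - (2 * I) * |g x| + I ^ 2 := by
    intro x; have : |g x| ^ 2 = (g x) ^ 2 := sq_abs _
    ring_nf
    nlinarith [sq_abs (g x)]
  have : (∫ x in (0:ℝ)..1, (|g x| - I) ^ 2)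
      = (∫ x in (0:ℝ)..1, (g x) ^ 2) - I ^ 2 := by
    simp_rw [hexp]
    rw [intervalIntegral.integral_add (hsq.sub (habs.const_mul (2 * I))) intervalIntegrable_const,
      intervalIntegral.integral_sub hsq (habs.const_mul (2 * I)),
      intervalIntegral.integral_const_mul, intervalIntegral.integral_const]
    simp [← hI]
    ring
  linarith [this ▸ h0]

lemma exists_zero_of_integral_zero {f : ℝ → ℝ} (hf : ContinuousOn f (Set.Icc 0 1))
    (h : ∫ x in (0:ℝ)..1, f x = 0) : ∃ x₀ ∈ Set.Icc (0:ℝ) 1, f x₀ = 0 := by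
  by_contra hc
  push_neg at hc
  have huIcc : Set.uIcc (0:ℝ) 1 = Set.Icc 0 1 := Set.uIcc_of_le zero_le_one
  have hfi : IntervalIntegrable f volume 0 1 := (huIcc ▸ hf).intervalIntegrable
  have h0 : (0:ℝ) ∈ Set.Icc (0:ℝ) 1 := by constructor <;> norm_num
  have key : ∀ x ∈ Set.Icc (0:ℝ) 1, (0 < f 0 → 0 < f x) ∧ (f 0 < 0 → f x < 0) := by
    intro x hx
    have hsub : Set.uIcc (0:ℝ) x ⊆ Set.Icc 0 1 := by
      rw [Set.uIcc_of_le hx.1]; exact Set.Icc_subset_Icc le_rfl hx.2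
    have ivt := intermediate_value_uIcc (hf.mono hsub)
    constructor
    · intro hpos
      by_contra hnp
      have hneg : f x < 0 := lt_of_le_of_ne (not_lt.mp hnp) (hc x hx)
      have : (0:ℝ) ∈ Set.uIcc (f 0) (f x) := by
        rw [Set.uIcc_of_ge (le_of_lt (lt_trans hneg hpos))]
        exact ⟨hneg.le, hpos.le⟩
      obtain ⟨y, hy, hfy⟩ := ivt this
      exact hc y (hsub hy) hfy
    · intro hneg
      by_contra hnp
      have hpos : 0 < f x := lt_of_le_of_ne (not_lt.mp hnp) (Ne.symm (hc x hx))
      have : (0:ℝ) ∈ Set.uIcc (f 0) (f x) := by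
        rw [Set.uIcc_of_le (le_of_lt (lt_trans hneg hpos))]
        exact ⟨hneg.le, hpos.le⟩
      obtain ⟨y, hy, hfy⟩ := ivt this
      exact hc y (hsub hy) hfy
  rcases lt_or_gt_of_ne (hc 0 h0) with hneg | hpos
  · have : 0 < ∫ x in (0:ℝ)..1, (-f) x :=
      intervalIntegral_pos_of_pos_on hfi.neg
        (fun x hx => by
          simpa using (key x (Set.Ioo_subset_Icc_self hx)).2 hneg) zero_lt_one
    simp only [Pi.neg_apply, intervalIntegral.integral_neg, h, neg_zero] at this
    exact lt_irrefl 0 this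
  · have : 0 < ∫ x in (0:ℝ)..1, f x :=
      intervalIntegral_pos_of_pos_on hfi
        (fun x hx => (key x (Set.Ioo_subset_Icc_self hx)).1 hpos) zero_lt_one
    rw [h] at this; exact lt_irrefl 0 this

lemma poincare01 {f f' : ℝ → ℝ} (hper : ∀ x, f (x + 1) = f x)
    (hd : ∀ x, HasDerivAt f (f' x) x) (hc : Continuous f')
    (hmean : ∫ x in (0:ℝ)..1, f x = 0) :
    ∫ x in (0:ℝ)..1, (f x) ^ 2 ≤ ∫ x in (0:ℝ)..1, (f' x) ^ 2 := by
  have hfc : Continuous f :=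
    continuous_iff_continuousAt.mpr fun x => (hd x).continuousAt
  obtain ⟨x₀, hx₀, hfx₀⟩ := exists_zero_of_integral_zero hfc.continuousOn hmean
  have hper' : ∀ x, f' (x + 1) = f' x := by
    intro x
    have h1 : HasDerivAt (fun y => f (y + 1)) (f' (x + 1)) x := by
      have := (hd (x + 1)).comp x ((hasDerivAt_id x).add_const 1)
      simpa [Function.comp_def] using this
    have h2 : (fun y => f (y + 1)) = f := funext hper
    rw [h2] at h1
    exact h1.unique (hd x)
  set I := ∫ x in (0:ℝ)..1, |f' x| with hIdef
  have hInn : 0 ≤ I := intervalIntegral.integral_nonneg zero_le_one fun x _ => abs_nonneg _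
  have hIshift : I = ∫ x in x₀..x₀ + 1, |f' x| := by
    have hp : Function.Periodic (fun x => |f' x|) 1 := fun x => by simp [hper' x]
    simpa using hp.intervalIntegral_add_eq 0 x₀
  have hbound : ∀ x ∈ Set.Icc x₀ (x₀ + 1), |f x| ≤ I := by
    intro x hx
    have hftc : ∫ y in x₀..x, f' y = f x - f x₀ :=
      intervalIntegral.integral_eq_sub_of_hasDerivAt (fun y _ => hd y)
        (hc.intervalIntegrable _ _)
    have : f x = ∫ y in x₀..x, f' y := by rw [hftc, hfx₀, sub_zero]
    rw [this]
    calc |∫ y in x₀..x, f' y| ≤ ∫ y in x₀..x, |f' y| :=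
          intervalIntegral.abs_integral_le_integral_abs hx.1
      _ ≤ ∫ y in x₀..x₀ + 1, |f' y| :=
          intervalIntegral.integral_mono_interval le_rfl hx.1 hx.2
            (Eventually.of_forall fun y => abs_nonneg _)
            (hc.abs.intervalIntegrable _ _)
      _ = I := hIshift.symm
  have hb01 : ∀ x ∈ Set.Icc (0:ℝ) 1, |f x| ≤ I := by
    intro x hx
    rcases le_or_gt x₀ x with hle | hlt
    · exact hbound x ⟨hle, hx.2.trans (by linarith [hx₀.1])⟩
    · have : |f (x + 1)| ≤ I :=
        hbound (x + 1) ⟨by linarith [hx.1, hx₀.2], by linarith⟩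
      rwa [hper x] at this
  have h1 : ∫ x in (0:ℝ)..1, (f x) ^ 2 ≤ ∫ x in (0:ℝ)..1, I ^ 2 := by
    apply intervalIntegral.integral_mono_on zero_le_one
      ((hfc.pow 2).intervalIntegrable _ _) intervalIntegrable_const
    intro x hx
    calc (f x) ^ 2 = |f x| ^ 2 := (sq_abs _).symm
      _ ≤ I ^ 2 := pow_le_pow_left₀ (abs_nonneg _) (hb01 x hx) 2
  have h2 : (∫ x in (0:ℝ)..1, I ^ 2) = I ^ 2 := by simp
  have h3 : I ^ 2 ≤ ∫ x in (0:ℝ)..1, (f' x) ^ 2 := cs01 hc.continuousOn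
  linarith [h2 ▸ h1]

lemma slice_derivs {F : ℝ → ℝ → ℝ}
    (hsm : ContDiffOn ℝ 2 (fun p : ℝ × ℝ => F p.1 p.2) (Set.univ ×ˢ Set.Ioi 0)) :
    ∃ Fx Ft Fxx : ℝ → ℝ → ℝ,
      (∀ x t : ℝ, 0 < t → HasDerivAt (fun y => F y t) (Fx x t) x) ∧
      (∀ x t : ℝ, 0 < t → HasDerivAt (fun s => F x s) (Ft x t) t) ∧
      (∀ x t : ℝ, 0 < t → HasDerivAt (fun y => Fx y t) (Fxx x t) x) ∧
      ContinuousOn (fun p : ℝ × ℝ => Fx p.1 p.2) (Set.univ ×ˢ Set.Ioi 0) ∧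
      ContinuousOn (fun p : ℝ × ℝ => Ft p.1 p.2) (Set.univ ×ˢ Set.Ioi 0) ∧
      ContinuousOn (fun p : ℝ × ℝ => Fxx p.1 p.2) (Set.univ ×ˢ Set.Ioi 0) := by
  set U : Set (ℝ × ℝ) := Set.univ ×ˢ Set.Ioi 0 with hUdef
  have hU : IsOpen U := isOpen_univ.prod isOpen_Ioi
  set Fu : ℝ × ℝ → ℝ := fun p => F p.1 p.2 with hFu
  have hat : ∀ p ∈ U, ContDiffAt ℝ 2 Fu p := fun p hp => hsm.contDiffAt (hU.mem_nhds hp)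
  have hmem : ∀ x t : ℝ, 0 < t → ((x, t) : ℝ × ℝ) ∈ U := by
    intro x t ht; exact ⟨Set.mem_univ _, ht⟩
  have hat1 : ∀ p ∈ U, ContDiffAt ℝ 1 (fderiv ℝ Fu) p := by
    intro p hp
    exact (hat p hp).fderiv_right (by norm_num)
  refine ⟨fun x t => fderiv ℝ Fu (x, t) (1, 0),
          fun x t => fderiv ℝ Fu (x, t) (0, 1),
          fun x t => fderiv ℝ (fun p => fderiv ℝ Fu p (1, 0)) (x, t) (1, 0),
          ?_, ?_, ?_, ?_, ?_, ?_⟩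
  · intro x t ht
    have hline : HasDerivAt (fun y : ℝ => ((y, t) : ℝ × ℝ)) ((1:ℝ), (0:ℝ)) x :=
      (hasDerivAt_id x).prodMk (hasDerivAt_const x t)
    have hdiff : DifferentiableAt ℝ Fu (x, t) :=
      ((hat _ (hmem x t ht)).differentiableAt (by norm_num))
    have := hdiff.hasFDerivAt.comp_hasDerivAt x hline
    simpa [Function.comp_def] using this
  · intro x t ht
    have hline : HasDerivAt (fun s : ℝ => ((x, s) : ℝ × ℝ)) ((0:ℝ), (1:ℝ)) t :=
      (hasDerivAt_const t x).prodMk (hasDerivAt_id t)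
    have hdiff : DifferentiableAt ℝ Fu (x, t) :=
      ((hat _ (hmem x t ht)).differentiableAt (by norm_num))
    have := hdiff.hasFDerivAt.comp_hasDerivAt t hline
    simpa [Function.comp_def] using this
  · intro x t ht
    have hgx : ContDiffAt ℝ 1 (fun p : ℝ × ℝ => fderiv ℝ Fu p (1, 0)) (x, t) :=
      (hat1 _ (hmem x t ht)).clm_apply contDiffAt_const
    have hline : HasDerivAt (fun y : ℝ => ((y, t) : ℝ × ℝ)) ((1:ℝ), (0:ℝ)) x :=
      (hasDerivAt_id x).prodMk (hasDerivAt_const x t)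
    have hdiff : DifferentiableAt ℝ (fun p : ℝ × ℝ => fderiv ℝ Fu p (1, 0)) (x, t) :=
      hgx.differentiableAt one_ne_zero
    have := hdiff.hasFDerivAt.comp_hasDerivAt x hline
    simpa [Function.comp_def] using this
  · intro p hp
    exact (((hat1 p hp).clm_apply contDiffAt_const).continuousAt).continuousWithinAt
  · intro p hp
    exact (((hat1 p hp).clm_apply contDiffAt_const).continuousAt).continuousWithinAt
  · intro p hp
    have hgx : ∀ q ∈ U, ContDiffAt ℝ 1 (fun p : ℝ × ℝ => fderiv ℝ Fu p (1, 0)) q :=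
      fun q hq => (hat1 q hq).clm_apply contDiffAt_const
    have : ContDiffAt ℝ 0 (fderiv ℝ (fun p : ℝ × ℝ => fderiv ℝ Fu p (1, 0))) p :=
      (hgx p hp).fderiv_right (by norm_num)
    exact ((this.clm_apply contDiffAt_const).continuousAt).continuousWithinAt

lemma slice_cont {P : ℝ → ℝ → ℝ}
    (hP : ContinuousOn (fun p : ℝ × ℝ => P p.1 p.2) (Set.univ ×ˢ Set.Ioi 0))
    {t : ℝ} (ht : 0 < t) : Continuous fun x => P x t := by
  have := hP.comp_continuous (f := fun x : ℝ => ((x, t) : ℝ × ℝ))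
    (continuous_id.prodMk continuous_const) (fun x => ⟨Set.mem_univ _, ht⟩)
  exact this

lemma hasDerivAt_param_integral {P Pt : ℝ → ℝ → ℝ}
    (hP : ContinuousOn (fun p : ℝ × ℝ => P p.1 p.2) (Set.univ ×ˢ Set.Ioi 0))
    (hPt : ContinuousOn (fun p : ℝ × ℝ => Pt p.1 p.2) (Set.univ ×ˢ Set.Ioi 0))
    (hd : ∀ x t : ℝ, 0 < t → HasDerivAt (fun s => P x s) (Pt x t) t)
    {t₀ : ℝ} (ht₀ : 0 < t₀) :
    HasDerivAt (fun t => ∫ x in (0:ℝ)..1, P x t) (∫ x in (0:ℝ)..1, Pt x t₀) t₀ := by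
  set K : Set (ℝ × ℝ) := Set.uIcc (0:ℝ) 1 ×ˢ Set.Icc (t₀ / 2) (t₀ + t₀ / 2) with hK
  have hKc : IsCompact K := isCompact_uIcc.prod isCompact_Icc
  have hKU : K ⊆ Set.univ ×ˢ Set.Ioi 0 := by
    rintro ⟨x, t⟩ ⟨_, ht⟩
    exact ⟨Set.mem_univ _, lt_of_lt_of_le (by linarith) ht.1⟩
  obtain ⟨C, hC⟩ := hKc.exists_bound_of_continuousOn (hPt.mono hKU)
  have hball : ∀ t ∈ ball t₀ (t₀ / 2), 0 < t ∧ t ∈ Set.Icc (t₀ / 2) (t₀ + t₀ / 2) := by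
    intro t htb
    rw [mem_ball, Real.dist_eq, abs_lt] at htb
    constructor
    · linarith
    · constructor <;> linarith [htb.1, htb.2]
  have key := intervalIntegral.hasDerivAt_integral_of_dominated_loc_of_deriv_le
    (F := fun t x => P x t) (F' := fun t x => Pt x t) (x₀ := t₀) (a := 0) (b := 1)
    (μ := volume) (bound := fun _ => C) (s := ball t₀ (t₀ / 2)) (ball_mem_nhds _ (by positivity))
    ?_ ?_ ?_ ?_ ?_ ?_
  · exact key.2
  · filter_upwards [isOpen_Ioi.mem_nhds ht₀] with t ht
    exact ((slice_cont hP ht).aestronglyMeasurable).restrict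
  · exact ((slice_cont hP ht₀).intervalIntegrable _ _)
  · exact ((slice_cont hPt ht₀).aestronglyMeasurable).restrict
  · refine Eventually.of_forall fun x hx t htb => ?_
    have hxI : x ∈ Set.uIcc (0:ℝ) 1 := by
      rw [Set.uIoc_of_le zero_le_one] at hx
      rw [Set.uIcc_of_le zero_le_one]
      exact Set.Ioc_subset_Icc_self hx
    exact hC (x, t) ⟨hxI, (hball t htb).2⟩
  · exact intervalIntegrable_const
  · refine Eventually.of_forall fun x hx t htb => hd x t (hball t htb).1

end Aux
theorem parabolic_forward_forward_long_time_convergence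
    (ε : ℝ) (hε : 0 < ε) (v m : ℝ → ℝ → ℝ)
    (hper_v : ∀ x t : ℝ, v (x + 1) t = v x t)
    (hper_m : ∀ x t : ℝ, m (x + 1) t = m x t)
    (hcont_v : ContinuousOn (fun p : ℝ × ℝ => v p.1 p.2) (Set.univ ×ˢ Set.Ici 0))
    (hcont_m : ContinuousOn (fun p : ℝ × ℝ => m p.1 p.2) (Set.univ ×ˢ Set.Ici 0))
    (hsm_v : ContDiffOn ℝ 2 (fun p : ℝ × ℝ => v p.1 p.2) (Set.univ ×ˢ Set.Ioi 0))
    (hsm_m : ContDiffOn ℝ 2 (fun p : ℝ × ℝ => m p.1 p.2) (Set.univ ×ˢ Set.Ioi 0))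
    (hmpos : ∀ x t : ℝ, 0 ≤ t → 0 < m x t)
    (heq1 : ∀ x t : ℝ, 0 < t →
      deriv (fun s => v x s) t +
          deriv (fun y => (v y t) ^ 2 / 2 - (m y t) ^ 2 / 2) x =
        ε * deriv (fun y => deriv (fun z => v z t) y) x)
    (heq2 : ∀ x t : ℝ, 0 < t →
      deriv (fun s => m x s) t - deriv (fun y => m y t * v y t) x =
        ε * deriv (fun y => deriv (fun z => m z t) y) x)
    (hinit_v : ∫ x in (0:ℝ)..1, v x 0 = 0)
    (hinit_m : ∫ x in (0:ℝ)..1, m x 0 = 1) :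
    Tendsto (fun t : ℝ => ∫ x in (0:ℝ)..1, |v x t|) atTop (nhds 0) ∧
    Tendsto (fun t : ℝ => ∫ x in (0:ℝ)..1, |m x t - 1|) atTop (nhds 0) := by
  obtain ⟨vx, vt, vxx, hAv, hBv, hCv, hvx_cont, hvt_cont, hvxx_cont⟩ := slice_derivs hsm_v
  obtain ⟨mx, mt, mxx, hAm, hBm, hCm, hmx_cont, hmt_cont, hmxx_cont⟩ := slice_derivs hsm_m
  have hsubU : (Set.univ ×ˢ Set.Ioi 0 : Set (ℝ × ℝ)) ⊆ Set.univ ×ˢ Set.Ici 0 := by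
    rintro ⟨x, t⟩ ⟨_, ht⟩; exact ⟨Set.mem_univ _, Set.mem_Ici.mpr (le_of_lt (Set.mem_Ioi.mp ht))⟩
  have hcv : ContinuousOn (fun p : ℝ × ℝ => v p.1 p.2) (Set.univ ×ˢ Set.Ioi 0) :=
    hcont_v.mono hsubU
  have hcm : ContinuousOn (fun p : ℝ × ℝ => m p.1 p.2) (Set.univ ×ˢ Set.Ioi 0) :=
    hcont_m.mono hsubU
  -- slice continuity for t ≥ 0
  have hslice_v : ∀ t : ℝ, 0 ≤ t → Continuous fun x => v x t := fun t ht =>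
    hcont_v.comp_continuous (continuous_id.prodMk continuous_const)
      (fun x => ⟨Set.mem_univ _, ht⟩)
  have hslice_m : ∀ t : ℝ, 0 ≤ t → Continuous fun x => m x t := fun t ht =>
    hcont_m.comp_continuous (continuous_id.prodMk continuous_const)
      (fun x => ⟨Set.mem_univ _, ht⟩)
  -- the PDE in terms of the explicit partial derivatives
  have heq1' : ∀ x t : ℝ, 0 < t →
      vt x t = ε * vxx x t - (v x t * vx x t - m x t * mx x t) := by
    intro x t ht
    have h1 : deriv (fun s => v x s) t = vt x t := (hBv x t ht).deriv
    have hflux : deriv (fun y => (v y t) ^ 2 / 2 - (m y t) ^ 2 / 2) x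
        = v x t * vx x t - m x t * mx x t := by
      have h := ((((hAv x t ht).pow 2).div_const 2).sub
        (((hAm x t ht).pow 2).div_const 2)).deriv
      rw [show (fun y => (v y t) ^ 2 / 2 - (m y t) ^ 2 / 2) = ((fun x => ((fun y => v y t) ^ 2) x / 2) - fun x => ((fun y => m y t) ^ 2) x / 2) from rfl, h]; push_cast; ring
    have hsecond : deriv (fun y => deriv (fun z => v z t) y) x = vxx x t := by
      have hfun : (fun y => deriv (fun z => v z t) y) = fun y => vx y t :=
        funext fun y => (hAv y t ht).deriv
      rw [hfun]; exact (hCv x t ht).deriv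
    have h0 := heq1 x t ht
    rw [h1, hflux, hsecond] at h0
    linarith
  have heq2' : ∀ x t : ℝ, 0 < t →
      mt x t = (mx x t * v x t + m x t * vx x t) + ε * mxx x t := by
    intro x t ht
    have h1 : deriv (fun s => m x s) t = mt x t := (hBm x t ht).deriv
    have hflux : deriv (fun y => m y t * v y t) x
        = mx x t * v x t + m x t * vx x t := ((hAm x t ht).mul (hAv x t ht)).deriv
    have hsecond : deriv (fun y => deriv (fun z => m z t) y) x = mxx x t := by
      have hfun : (fun y => deriv (fun z => m z t) y) = fun y => mx y t :=
        funext fun y => (hAm y t ht).deriv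
      rw [hfun]; exact (hCm x t ht).deriv
    have h0 := heq2 x t ht
    rw [h1, hflux, hsecond] at h0
    linarith
  -- periodicity of space derivatives
  have hper_vx : ∀ x t : ℝ, 0 < t → vx (x + 1) t = vx x t := by
    intro x t ht
    have h1 : HasDerivAt (fun y => v (y + 1) t) (vx (x + 1) t) x := by
      have := (hAv (x + 1) t ht).comp x ((hasDerivAt_id x).add_const 1)
      simpa [Function.comp_def] using this
    have h2 : (fun y => v (y + 1) t) = fun y => v y t := funext fun y => hper_v y t
    rw [h2] at h1
    exact h1.unique (hAv x t ht)
  have hper_mx : ∀ x t : ℝ, 0 < t → mx (x + 1) t = mx x t := by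
    intro x t ht
    have h1 : HasDerivAt (fun y => m (y + 1) t) (mx (x + 1) t) x := by
      have := (hAm (x + 1) t ht).comp x ((hasDerivAt_id x).add_const 1)
      simpa [Function.comp_def] using this
    have h2 : (fun y => m (y + 1) t) = fun y => m y t := funext fun y => hper_m y t
    rw [h2] at h1
    exact h1.unique (hAm x t ht)
  -- mean conservation for v
  have hmean_v : ∀ t : ℝ, 0 ≤ t → (∫ x in (0:ℝ)..1, v x t) = 0 := by
    have hint_vt : ∀ t : ℝ, 0 < t → (∫ x in (0:ℝ)..1, vt x t) = 0 := by
      intro t ht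
      set Φ : ℝ → ℝ := fun y => ε * vx y t - (v y t) ^ 2 / 2 + (m y t) ^ 2 / 2 with hΦ
      have hΦd : ∀ y, HasDerivAt Φ (vt y t) y := by
        intro y
        have h := (((hCv y t ht).const_mul ε).sub
          (((hAv y t ht).pow 2).div_const 2)).add (((hAm y t ht).pow 2).div_const 2)
        have hrw : vt y t
            = ε * vxx y t - ((2:ℕ) * v y t ^ 1 * vx y t) / 2
              + ((2:ℕ) * m y t ^ 1 * mx y t) / 2 := by
          rw [heq1' y t ht]; push_cast; ring
        rw [hrw]
        exact h
      have hcont_vt : Continuous fun x => vt x t := slice_cont hvt_cont ht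
      have hftc : ∫ x in (0:ℝ)..1, vt x t = Φ 1 - Φ 0 :=
        intervalIntegral.integral_eq_sub_of_hasDerivAt (fun y _ => hΦd y)
          (hcont_vt.intervalIntegrable _ _)
      have hΦper : Φ 1 = Φ 0 := by
        have h1 : Φ (0 + 1) = Φ 0 := by
          simp only [hΦ, hper_v 0 t, hper_m 0 t, hper_vx 0 t ht]
        simpa using h1
      rw [hftc, hΦper, sub_self]
    set A : ℝ → ℝ := fun t => ∫ x in (0:ℝ)..1, v x t with hA
    have hA' : ∀ t : ℝ, 0 < t → HasDerivAt A 0 t := by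
      intro t ht
      have := hasDerivAt_param_integral hcv hvt_cont hBv ht
      rwa [hint_vt t ht] at this
    have hAcont : ContinuousOn A (Set.Ici 0) := by
      have hmax : Continuous fun p : ℝ × ℝ => ((p.2, max p.1 0) : ℝ × ℝ) :=
        continuous_snd.prodMk (continuous_fst.max continuous_const)
      have hcu : Continuous (Function.uncurry fun t x => v x (max t 0)) :=
        hcont_v.comp_continuous hmax (fun p => ⟨Set.mem_univ _, Set.mem_Ici.mpr (le_max_right _ _)⟩)
      have hci := intervalIntegral.continuous_parametric_intervalIntegral_of_continuous'
        (μ := volume) hcu 0 1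
      refine hci.continuousOn.congr ?_
      intro t ht
      simp only [hA]
      rw [max_eq_left (Set.mem_Ici.mp ht)]
    have hdiffA : DifferentiableOn ℝ A (interior (Set.Ici (0:ℝ))) := by
      rw [interior_Ici]
      exact fun t ht => (hA' t ht).differentiableAt.differentiableWithinAt
    have hd0 : ∀ s ∈ interior (Set.Ici (0:ℝ)), deriv A s = 0 := by
      rw [interior_Ici]; exact fun s hs => (hA' s hs).deriv
    have hmono := monotoneOn_of_deriv_nonneg (convex_Ici 0) hAcont hdiffA
      (fun s hs => (hd0 s hs).ge)
    have hanti := antitoneOn_of_deriv_nonpos (convex_Ici 0) hAcont hdiffA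
      (fun s hs => (hd0 s hs).le)
    intro t ht
    have h0 : (0:ℝ) ∈ Set.Ici (0:ℝ) := Set.self_mem_Ici
    have : A t = A 0 := le_antisymm (hanti h0 ht ht) (hmono h0 ht ht)
    simpa [hA, hinit_v] using this
  -- mean conservation for m
  have hmean_m : ∀ t : ℝ, 0 ≤ t → (∫ x in (0:ℝ)..1, m x t) = 1 := by
    have hint_mt : ∀ t : ℝ, 0 < t → (∫ x in (0:ℝ)..1, mt x t) = 0 := by
      intro t ht
      set Φ : ℝ → ℝ := fun y => m y t * v y t + ε * mx y t with hΦ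
      have hΦd : ∀ y, HasDerivAt Φ (mt y t) y := by
        intro y
        have h := ((hAm y t ht).mul (hAv y t ht)).add ((hCm y t ht).const_mul ε)
        rw [heq2' y t ht]
        exact h
      have hcont_mt : Continuous fun x => mt x t := slice_cont hmt_cont ht
      have hftc : ∫ x in (0:ℝ)..1, mt x t = Φ 1 - Φ 0 :=
        intervalIntegral.integral_eq_sub_of_hasDerivAt (fun y _ => hΦd y)
          (hcont_mt.intervalIntegrable _ _)
      have hΦper : Φ 1 = Φ 0 := by
        have h1 : Φ (0 + 1) = Φ 0 := by
          simp only [hΦ, hper_v 0 t, hper_m 0 t, hper_mx 0 t ht]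
        simpa using h1
      rw [hftc, hΦper, sub_self]
    set A : ℝ → ℝ := fun t => ∫ x in (0:ℝ)..1, m x t with hA
    have hA' : ∀ t : ℝ, 0 < t → HasDerivAt A 0 t := by
      intro t ht
      have := hasDerivAt_param_integral hcm hmt_cont hBm ht
      rwa [hint_mt t ht] at this
    have hAcont : ContinuousOn A (Set.Ici 0) := by
      have hmax : Continuous fun p : ℝ × ℝ => ((p.2, max p.1 0) : ℝ × ℝ) :=
        continuous_snd.prodMk (continuous_fst.max continuous_const)
      have hcu : Continuous (Function.uncurry fun t x => m x (max t 0)) :=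
        hcont_m.comp_continuous hmax (fun p => ⟨Set.mem_univ _, Set.mem_Ici.mpr (le_max_right _ _)⟩)
      have hci := intervalIntegral.continuous_parametric_intervalIntegral_of_continuous'
        (μ := volume) hcu 0 1
      refine hci.continuousOn.congr ?_
      intro t ht
      simp only [hA]
      rw [max_eq_left (Set.mem_Ici.mp ht)]
    have hdiffA : DifferentiableOn ℝ A (interior (Set.Ici (0:ℝ))) := by
      rw [interior_Ici]
      exact fun t ht => (hA' t ht).differentiableAt.differentiableWithinAt
    have hd0 : ∀ s ∈ interior (Set.Ici (0:ℝ)), deriv A s = 0 := by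
      rw [interior_Ici]; exact fun s hs => (hA' s hs).deriv
    have hmono := monotoneOn_of_deriv_nonneg (convex_Ici 0) hAcont hdiffA
      (fun s hs => (hd0 s hs).ge)
    have hanti := antitoneOn_of_deriv_nonpos (convex_Ici 0) hAcont hdiffA
      (fun s hs => (hd0 s hs).le)
    intro t ht
    have h0 : (0:ℝ) ∈ Set.Ici (0:ℝ) := Set.self_mem_Ici
    have : A t = A 0 := le_antisymm (hanti h0 ht ht) (hmono h0 ht ht)
    simpa [hA, hinit_m] using this
  -- energy and dissipation
  set W : ℝ → ℝ := fun t => ∫ x in (0:ℝ)..1, ((v x t) ^ 2 + (m x t - 1) ^ 2) with hWdef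
  set D : ℝ → ℝ := fun t => ∫ x in (0:ℝ)..1, ((vx x t) ^ 2 + (mx x t) ^ 2) with hDdef
  have hPcont : ContinuousOn
      (fun p : ℝ × ℝ => (v p.1 p.2) ^ 2 + (m p.1 p.2 - 1) ^ 2) (Set.univ ×ˢ Set.Ioi 0) :=
    (hcv.pow 2).add ((hcm.sub continuousOn_const).pow 2)
  have hPtcont : ContinuousOn
      (fun p : ℝ × ℝ => 2 * v p.1 p.2 * vt p.1 p.2 + 2 * (m p.1 p.2 - 1) * mt p.1 p.2)
      (Set.univ ×ˢ Set.Ioi 0) :=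
    ((continuousOn_const.mul hcv).mul hvt_cont).add
      ((continuousOn_const.mul (hcm.sub continuousOn_const)).mul hmt_cont)
  have hPd : ∀ x t : ℝ, 0 < t → HasDerivAt (fun s => (v x s) ^ 2 + (m x s - 1) ^ 2)
      (2 * v x t * vt x t + 2 * (m x t - 1) * mt x t) t := by
    intro x t ht
    have h := ((hBv x t ht).pow 2).add (((hBm x t ht).sub_const 1).pow 2)
    refine h.congr_deriv ?_
    push_cast; ring
  have hWd : ∀ t : ℝ, 0 < t → HasDerivAt W
      (∫ x in (0:ℝ)..1, (2 * v x t * vt x t + 2 * (m x t - 1) * mt x t)) t := fun t ht =>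
    hasDerivAt_param_integral hPcont hPtcont hPd ht
  have hDval : ∀ t : ℝ, 0 < t →
      (∫ x in (0:ℝ)..1, (2 * v x t * vt x t + 2 * (m x t - 1) * mt x t))
        = -(2 * ε) * D t := by
    intro t ht
    set Φ : ℝ → ℝ := fun y =>
      2 * (-(v y t ^ 3 / 3) + v y t * m y t ^ 2 - v y t * m y t
        + ε * (v y t * vx y t) + ε * ((m y t - 1) * mx y t)) with hΦ
    have hΦd : ∀ y, HasDerivAt Φ
        ((2 * v y t * vt y t + 2 * (m y t - 1) * mt y t)
          + 2 * ε * ((vx y t) ^ 2 + (mx y t) ^ 2)) y := by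
      intro y
      have hv := hAv y t ht
      have hm := hAm y t ht
      have hvx := hCv y t ht
      have hmx := hCm y t ht
      have h := (((((hv.pow 3).div_const 3).neg.add (hv.mul (hm.pow 2))).sub
        (hv.mul hm)).add ((hv.mul hvx).const_mul ε)).add
        (((hm.sub_const 1).mul hmx).const_mul ε)
      have h2 := h.const_mul 2
      refine h2.congr_deriv ?_
      rw [heq1' y t ht, heq2' y t ht]
      simp only [Pi.pow_apply]; push_cast; ring
    have hi_v := hslice_v t ht.le
    have hi_m := hslice_m t ht.le
    have hi_vt := slice_cont hvt_cont ht
    have hi_mt := slice_cont hmt_cont ht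
    have hi_vx := slice_cont hvx_cont ht
    have hi_mx := slice_cont hmx_cont ht
    have hint_pt : IntervalIntegrable
        (fun x => 2 * v x t * vt x t + 2 * (m x t - 1) * mt x t) volume 0 1 :=
      ((((continuous_const.mul hi_v).mul hi_vt).add
        ((continuous_const.mul (hi_m.sub continuous_const)).mul hi_mt)).intervalIntegrable _ _)
    have hint_d : IntervalIntegrable
        (fun x => 2 * ε * ((vx x t) ^ 2 + (mx x t) ^ 2)) volume 0 1 :=
      ((continuous_const.mul ((hi_vx.pow 2).add (hi_mx.pow 2))).intervalIntegrable _ _)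
    have hftc : ∫ x in (0:ℝ)..1,
        ((2 * v x t * vt x t + 2 * (m x t - 1) * mt x t)
          + 2 * ε * ((vx x t) ^ 2 + (mx x t) ^ 2)) = Φ 1 - Φ 0 :=
      intervalIntegral.integral_eq_sub_of_hasDerivAt (fun y _ => hΦd y)
        (hint_pt.add hint_d)
    have hΦper : Φ 1 = Φ 0 := by
      have h1 : Φ (0 + 1) = Φ 0 := by
        simp only [hΦ, hper_v 0 t, hper_m 0 t, hper_vx 0 t ht, hper_mx 0 t ht]
      simpa using h1
    rw [intervalIntegral.integral_add hint_pt hint_d, hΦper, sub_self] at hftc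
    have hconst_mul : (∫ x in (0:ℝ)..1, 2 * ε * ((vx x t) ^ 2 + (mx x t) ^ 2))
        = 2 * ε * D t := by
      rw [hDdef, ← intervalIntegral.integral_const_mul]
    linarith [hftc, hconst_mul ▸ hftc]
  -- Poincaré inequality: W ≤ D
  have hWD : ∀ t : ℝ, 0 < t → W t ≤ D t := by
    intro t ht
    have hv2 : ∫ x in (0:ℝ)..1, (v x t) ^ 2 ≤ ∫ x in (0:ℝ)..1, (vx x t) ^ 2 :=
      poincare01 (fun x => hper_v x t) (fun x => hAv x t ht)
        (slice_cont hvx_cont ht) (hmean_v t ht.le)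
    have hm2 : ∫ x in (0:ℝ)..1, (m x t - 1) ^ 2 ≤ ∫ x in (0:ℝ)..1, (mx x t) ^ 2 := by
      refine poincare01 (f := fun x => m x t - 1) (f' := fun x => mx x t)
        (fun x => by simp [hper_m x t]) (fun x => (hAm x t ht).sub_const 1)
        (slice_cont hmx_cont ht) ?_
      rw [intervalIntegral.integral_sub
        (((hslice_m t ht.le)).intervalIntegrable _ _) intervalIntegrable_const,
        hmean_m t ht.le]
      simp
    have hWsplit : W t = (∫ x in (0:ℝ)..1, (v x t) ^ 2)
        + ∫ x in (0:ℝ)..1, (m x t - 1) ^ 2 := by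
      rw [hWdef]
      exact intervalIntegral.integral_add
        ((((hslice_v t ht.le)).pow 2).intervalIntegrable _ _)
        ((((hslice_m t ht.le).sub continuous_const).pow 2).intervalIntegrable _ _)
    have hDsplit : D t = (∫ x in (0:ℝ)..1, (vx x t) ^ 2)
        + ∫ x in (0:ℝ)..1, (mx x t) ^ 2 := by
      rw [hDdef]
      exact intervalIntegral.integral_add
        (((slice_cont hvx_cont ht).pow 2).intervalIntegrable _ _)
        (((slice_cont hmx_cont ht).pow 2).intervalIntegrable _ _)
    rw [hWsplit, hDsplit]
    exact add_le_add hv2 hm2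
  -- exponential decay of the energy
  have hWd' : ∀ t : ℝ, 0 < t → HasDerivAt W (-(2 * ε) * D t) t := fun t ht =>
    hDval t ht ▸ hWd t ht
  set G : ℝ → ℝ := fun t => Real.exp (2 * ε * t) * W t with hG
  have hGd : ∀ t : ℝ, 0 < t → HasDerivAt G
      (Real.exp (2 * ε * t) * (2 * ε) * W t
        + Real.exp (2 * ε * t) * (-(2 * ε) * D t)) t := by
    intro t ht
    have h1 : HasDerivAt (fun s : ℝ => 2 * ε * s) (2 * ε) t := by
      simpa using (hasDerivAt_id t).const_mul (2 * ε)
    have hexp : HasDerivAt (fun s => Real.exp (2 * ε * s)) (Real.exp (2 * ε * t) * (2 * ε)) t := by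
      simpa [Function.comp_def] using (Real.hasDerivAt_exp (2 * ε * t)).comp t h1
    exact hexp.mul (hWd' t ht)
  have hGanti : AntitoneOn G (Set.Ici 1) := by
    refine antitoneOn_of_deriv_nonpos (convex_Ici 1) ?_ ?_ ?_
    · intro t ht
      exact ((hGd t (lt_of_lt_of_le zero_lt_one ht)).continuousAt).continuousWithinAt
    · rw [interior_Ici]
      intro t ht
      exact (hGd t (lt_trans zero_lt_one ht)).differentiableAt.differentiableWithinAt
    · rw [interior_Ici]
      intro t ht
      have ht0 : 0 < t := lt_trans zero_lt_one ht
      rw [(hGd t ht0).deriv]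
      have h1 := hWD t ht0
      have h2 : Real.exp (2 * ε * t) * (2 * ε) * W t ≤ Real.exp (2 * ε * t) * (2 * ε) * D t :=
        mul_le_mul_of_nonneg_left h1
          (mul_nonneg (Real.exp_pos _).le (by linarith))
      nlinarith [h2]
  have hWnn : ∀ t : ℝ, 0 ≤ W t := fun t =>
    intervalIntegral.integral_nonneg zero_le_one (fun x _ => by positivity)
  have hWbd : ∀ t : ℝ, 1 ≤ t → W t ≤ Real.exp (2 * ε) * W 1 * Real.exp (-(2 * ε) * t) := by
    intro t ht
    have hG1 : G t ≤ G 1 := hGanti Set.self_mem_Ici ht ht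
    simp only [hG] at hG1
    have hep : Real.exp (-(2 * ε) * t) * Real.exp (2 * ε * t) = 1 := by
      rw [← Real.exp_add, show -(2 * ε) * t + 2 * ε * t = 0 by ring, Real.exp_zero]
    have h2 : Real.exp (2 * ε * 1) = Real.exp (2 * ε) := by norm_num
    rw [h2] at hG1
    calc W t = (Real.exp (-(2 * ε) * t) * Real.exp (2 * ε * t)) * W t := by
          rw [hep, one_mul]
      _ = Real.exp (-(2 * ε) * t) * (Real.exp (2 * ε * t) * W t) := by ring
      _ ≤ Real.exp (-(2 * ε) * t) * (Real.exp (2 * ε) * W 1) :=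
          mul_le_mul_of_nonneg_left hG1 (Real.exp_pos _).le
      _ = Real.exp (2 * ε) * W 1 * Real.exp (-(2 * ε) * t) := by ring
  have hupper : Tendsto (fun t => Real.exp (2 * ε) * W 1 * Real.exp (-(2 * ε) * t))
      atTop (nhds 0) := by
    have h1 : Tendsto (fun t : ℝ => 2 * ε * t) atTop atTop :=
      Tendsto.const_mul_atTop (by linarith) tendsto_id
    have h2 : Tendsto (fun t : ℝ => Real.exp (-(2 * ε * t))) atTop (nhds 0) :=
      Real.tendsto_exp_neg_atTop_nhds_zero.comp h1
    have h3 : (fun t : ℝ => Real.exp (2 * ε) * W 1 * Real.exp (-(2 * ε) * t))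
        = fun t => Real.exp (2 * ε) * W 1 * Real.exp (-(2 * ε * t)) := by
      funext t; congr 1; congr 1; ring
    rw [h3]
    simpa using h2.const_mul (Real.exp (2 * ε) * W 1)
  have hWlim : Tendsto W atTop (nhds 0) := by
    refine tendsto_of_tendsto_of_tendsto_of_le_of_le' tendsto_const_nhds hupper ?_ ?_
    · exact Eventually.of_forall hWnn
    · filter_upwards [eventually_ge_atTop (1:ℝ)] with t ht using hWbd t ht
  have hsqrt : Tendsto (fun t => Real.sqrt (W t)) atTop (nhds 0) := by
    have := (Real.continuous_sqrt.tendsto 0).comp hWlim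
    simpa [Function.comp_def] using this
  constructor
  · refine tendsto_of_tendsto_of_tendsto_of_le_of_le' tendsto_const_nhds hsqrt ?_ ?_
    · exact Eventually.of_forall fun t =>
        intervalIntegral.integral_nonneg zero_le_one fun x _ => abs_nonneg _
    · filter_upwards [eventually_gt_atTop (0:ℝ)] with t ht
      have hvc := hslice_v t ht.le
      have hmc := hslice_m t ht.le
      have h1 : (∫ x in (0:ℝ)..1, |v x t|) ^ 2 ≤ ∫ x in (0:ℝ)..1, (v x t) ^ 2 :=
        cs01 hvc.continuousOn
      have h2 : (∫ x in (0:ℝ)..1, (v x t) ^ 2) ≤ W t := by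
        rw [hWdef]
        refine intervalIntegral.integral_mono_on zero_le_one
          ((hvc.pow 2).intervalIntegrable _ _)
          (((hvc.pow 2).add ((hmc.sub continuous_const).pow 2)).intervalIntegrable _ _) ?_
        intro x _
        nlinarith [sq_nonneg (m x t - 1)]
      have h3 : 0 ≤ ∫ x in (0:ℝ)..1, |v x t| :=
        intervalIntegral.integral_nonneg zero_le_one fun x _ => abs_nonneg _
      exact (Real.le_sqrt h3 (hWnn t)).mpr (le_trans h1 h2)
  · refine tendsto_of_tendsto_of_tendsto_of_le_of_le' tendsto_const_nhds hsqrt ?_ ?_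
    · exact Eventually.of_forall fun t =>
        intervalIntegral.integral_nonneg zero_le_one fun x _ => abs_nonneg _
    · filter_upwards [eventually_gt_atTop (0:ℝ)] with t ht
      have hvc := hslice_v t ht.le
      have hmc := hslice_m t ht.le
      have h1 : (∫ x in (0:ℝ)..1, |m x t - 1|) ^ 2 ≤ ∫ x in (0:ℝ)..1, (m x t - 1) ^ 2 :=
        cs01 (g := fun x => m x t - 1) (hmc.sub continuous_const).continuousOn
      have h2 : (∫ x in (0:ℝ)..1, (m x t - 1) ^ 2) ≤ W t := by
        rw [hWdef]
        refine intervalIntegral.integral_mono_on zero_le_one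
          (((hmc.sub continuous_const).pow 2).intervalIntegrable _ _)
          (((hvc.pow 2).add ((hmc.sub continuous_const).pow 2)).intervalIntegrable _ _) ?_
        intro x _
        nlinarith [sq_nonneg (v x t)]
      have h3 : 0 ≤ ∫ x in (0:ℝ)..1, |m x t - 1| :=
        intervalIntegral.integral_nonneg zero_le_one fun x _ => abs_nonneg _
      exact (Real.le_sqrt h3 (hWnn t)).mpr (le_trans h1 h2)
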